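/- arXiv:1306.3171 — 3 statements merged into one kernel-verified Lean document; each statement's English description precedes it below -/
import Mathlib

section
/- Let $\widehat{\Sigma} \in \mathbb{R}^{p\times p}$ be a symmetric positive semidefinite matrix with $\widehat{\Sigma}_{ii} > 0$, and let $\mu \in [0,1)$. If $m \in \mathbb{R}^p$ satisfies $\|\widehat{\Sigma} m - e_i\|_\infty \le \mu$, then $m^{\sf T} \widehat{\Sigma} m \ge (1-\mu)^2 / \widehat{\Sigma}_{ii}$. -/
open Matrix

/-- Variance lower bound for the de-biased LASSO: any feasible point `m` of the
decorrelation program with parameter `μ ∈ [0,1)` satisfies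
`mᵀ Σ̂ m ≥ (1-μ)² / Σ̂ᵢᵢ`. -/
theorem debiased_variance_lower_bound
    (p : ℕ) (Shat : Matrix (Fin p) (Fin p) ℝ)
    (hsym : Shat.IsSymm) (hpsd : Shat.PosSemidef)
    (i : Fin p) (hdiag : 0 < Shat i i)
    (μ : ℝ) (hμ0 : 0 ≤ μ) (hμ1 : μ < 1)
    (m : Fin p → ℝ)
    (hfeas : ∀ j, |(Shat *ᵥ m) j - (if j = i then (1:ℝ) else 0)| ≤ μ) :
    (1 - μ)^2 / Shat i i ≤ m ⬝ᵥ (Shat *ᵥ m) := by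
  set a := Shat i i with ha
  set b := m ⬝ᵥ (Shat *ᵥ m) with hb
  set c := (Shat *ᵥ m) i with hc
  have hc1 : 1 - μ ≤ c := by
    have h := hfeas i
    rw [if_pos rfl] at h
    have := (abs_le.mp h).1
    linarith
  have hcpos : 0 < c := by linarith
  have hb0 : 0 ≤ b := by simpa [star_trivial] using hpsd.dotProduct_mulVec_nonneg m
  -- symmetry: m ⬝ᵥ (Shat *ᵥ e_i) = c
  have hsymm : m ⬝ᵥ (Shat *ᵥ Pi.single i 1) = c := by
    rw [Matrix.dotProduct_mulVec]
    have : m ᵥ* Shat = Shat *ᵥ m := by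
      rw [← Matrix.mulVec_transpose, hsym.eq]
    rw [this, dotProduct_single, mul_one]
  have hei : Pi.single i 1 ⬝ᵥ (Shat *ᵥ Pi.single i 1) = a := by
    simp [single_dotProduct, Matrix.mulVec_single, ha]
  have heim : Pi.single i 1 ⬝ᵥ (Shat *ᵥ m) = c := by
    rw [single_dotProduct, one_mul, hc]
  have key : ∀ t : ℝ, 0 ≤ a - 2*t*c + t^2*b := by
    intro t
    have h := hpsd.dotProduct_mulVec_nonneg (Pi.single i 1 - t • m)
    simp only [star_trivial] at h
    simp only [Matrix.mulVec_sub, Matrix.mulVec_smul, sub_dotProduct,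
      smul_dotProduct, dotProduct_sub, dotProduct_smul,
      smul_eq_mul, hei, heim, hsymm] at h
    nlinarith [h]
  by_cases hbz : b = 0
  · exfalso
    have := key ((a + 1) / (2 * c))
    rw [hbz] at this
    have h2 : 2 * ((a + 1) / (2 * c)) * c = a + 1 := by
      field_simp
    nlinarith
  · have hbpos : 0 < b := lt_of_le_of_ne hb0 (Ne.symm hbz)
    have h := key (c / b)
    have hcsq : c ^ 2 ≤ a * b := by
      have h2 : 2 * (c / b) * c = 2 * (c ^ 2 / b) := by ring
      have h3 : (c / b) ^ 2 * b = c ^ 2 / b := by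
        field_simp
      rw [h2, h3] at h
      have : c ^ 2 / b ≤ a := by linarith
      calc c ^ 2 = c ^ 2 / b * b := by field_simp
        _ ≤ a * b := by nlinarith
    have h1m : (1 - μ) ^ 2 ≤ c ^ 2 := by nlinarith
    rw [div_le_iff₀ hdiag]
    nlinarith
end

section
/- For a symmetric positive semidefinite matrix $\widehat{\Sigma} \in \mathbb{R}^{p\times p}$, any vector $m \in \mathbb{R}^p$ with $\|\widehat{\Sigma} m - e_i\|_\infty \le \mu$, and any $c \ge 0$, we have $m^{\sf T}\widehat{\Sigma} m \ge c(1-\mu) - \frac{c^2}{4}\widehat{\Sigma}_{ii}$. -/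
open Matrix

/-- Lagrangian lower bound step: for any feasible `m` of the decorrelation
program and any `c ≥ 0`, `mᵀ Σ̂ m ≥ c(1-μ) - (c²/4) Σ̂ᵢᵢ`. -/
theorem debiased_lagrangian_lower_bound
    (p : ℕ) (Shat : Matrix (Fin p) (Fin p) ℝ)
    (hsym : Shat.IsSymm) (hpsd : Shat.PosSemidef)
    (i : Fin p) (μ : ℝ)
    (m : Fin p → ℝ)
    (hfeas : ∀ j, |(Shat *ᵥ m) j - (if j = i then (1:ℝ) else 0)| ≤ μ)
    (c : ℝ) (hc : 0 ≤ c) :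
    c * (1 - μ) - c^2 / 4 * Shat i i ≤ m ⬝ᵥ (Shat *ᵥ m) := by
  set e : Fin p → ℝ := Pi.single i 1 with he
  set t : ℝ := c / 2 with ht
  have hb : 1 - μ ≤ (Shat *ᵥ m) i := by
    have := hfeas i
    rw [if_pos rfl] at this
    have := abs_le.mp this
    linarith [this.1]
  have hpos := hpsd.dotProduct_mulVec_nonneg (m - t • e)
  have hSe : Shat *ᵥ e = fun j => Shat j i := by
    funext j
    simp [he, mulVec_single]
  have heS : ∀ v : Fin p → ℝ, e ⬝ᵥ v = v i := by
    intro v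
    simp [he]
  have hmSe : m ⬝ᵥ (Shat *ᵥ e) = (Shat *ᵥ m) i := by
    rw [hSe]
    simp only [dotProduct, mulVec, dotProduct]
    refine Finset.sum_congr rfl fun j _ => ?_
    have : Shat j i = Shat i j := by
      have := congrFun (congrFun hsym i) j
      simpa [Matrix.transpose_apply] using this
    rw [this]; ring
  have hexp : (m - t • e) ⬝ᵥ (Shat *ᵥ (m - t • e)) =
      m ⬝ᵥ (Shat *ᵥ m) - 2 * t * (Shat *ᵥ m) i + t^2 * Shat i i := by
    rw [mulVec_sub, mulVec_smul]
    rw [sub_dotProduct, dotProduct_sub, dotProduct_sub]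
    rw [smul_dotProduct, smul_dotProduct, dotProduct_smul, dotProduct_smul]
    rw [hmSe, heS, heS]
    have : (Shat *ᵥ e) i = Shat i i := by rw [hSe]
    rw [this]
    simp only [smul_eq_mul]
    ring
  rw [show star (m - t • e) = m - t • e from rfl, hexp] at hpos
  have hcb : c * (1 - μ) ≤ c * (Shat *ᵥ m) i := by
    exact mul_le_mul_of_nonneg_left hb hc
  rw [ht] at hpos
  nlinarith [hpos, hcb]
end

section
/- Let $\widehat{\Sigma} \in \mathbb{R}^{p\times p}$ be symmetric positive semidefinite, and suppose $M \in \mathbb{R}^{p\times p}$ satisfies $|M\widehat{\Sigma} - I|_\infty \le \mu$ with $\mu < 1/2$. Then for every $i$, the diagonal entry $[M\widehat{\Sigma}M^{\sf T}]_{ii} \ge 1/(4\widehat{\Sigma}_{ii})$ whenever $\widehat{\Sigma}_{ii} > 0$. -/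
open Matrix

/-- If `|MΣ̂ − I|∞ ≤ μ < 1/2`, then the diagonal entries of `MΣ̂Mᵀ` satisfy
`[MΣ̂Mᵀ]ᵢᵢ ≥ 1/(4 Σ̂ᵢᵢ)` whenever `Σ̂ᵢᵢ > 0`. -/
theorem diag_variance_lower_bound
    (p : ℕ) (Shat M : Matrix (Fin p) (Fin p) ℝ)
    (hsym : Shat.IsSymm) (hpsd : Shat.PosSemidef)
    (μ : ℝ) (hμ : μ < 1/2)
    (hcoh : ∀ i j, |(M * Shat - 1) i j| ≤ μ) :
    ∀ i, 0 < Shat i i → 1 / (4 * Shat i i) ≤ (M * Shat * Mᵀ) i i := by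
  intro i hi
  classical
  open scoped MatrixOrder in
  set A := CFC.sqrt Shat with hAdef
  open scoped MatrixOrder in
  have hAA : A * A = Shat := CFC.sqrt_mul_sqrt_self Shat hpsd.nonneg
  open scoped MatrixOrder in
  have hAsym : Aᵀ = A := (CFC.sqrt_nonneg Shat).posSemidef.isHermitian
  set m : Fin p → ℝ := fun j => M i j with hm
  set e : Fin p → ℝ := Pi.single i 1 with he
  set x : Fin p → ℝ := A *ᵥ m with hx
  set y : Fin p → ℝ := A *ᵥ e with hy
  have key : ∀ v w : Fin p → ℝ, v ⬝ᵥ Shat *ᵥ w = (A *ᵥ v) ⬝ᵥ (A *ᵥ w) := by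
    intro v w
    rw [← hAA, ← mulVec_mulVec, dotProduct_mulVec v A, ← mulVec_transpose, hAsym]
  have h1 : (M * Shat * Mᵀ) i i = x ⬝ᵥ x := by
    rw [hx, ← key]
    simp only [mul_apply, dotProduct, mulVec, Finset.sum_mul, Finset.mul_sum, transpose_apply, hm]
    rw [Finset.sum_comm]
    congr 1; ext k; congr 1; ext j; ring
  have h2 : (M * Shat) i i = x ⬝ᵥ y := by
    rw [hx, hy, ← key]
    simp [mulVec, dotProduct, mul_apply, he, hm, Pi.single_apply, mul_ite, Finset.sum_ite_eq']
  have h3 : Shat i i = y ⬝ᵥ y := by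
    rw [hy, ← key]
    simp [mulVec, dotProduct, he, Pi.single_apply, mul_ite, ite_mul, Finset.sum_ite_eq, Finset.sum_ite_eq']
  -- lower bound on x ⬝ᵥ y
  have hxy : (1:ℝ)/2 ≤ x ⬝ᵥ y := by
    have := hcoh i i
    simp only [Matrix.sub_apply, one_apply_eq] at this
    have h := abs_le.mp this
    linarith [h2 ▸ h.1]
  -- Cauchy-Schwarz
  have hcs : (x ⬝ᵥ y)^2 ≤ (x ⬝ᵥ x) * (y ⬝ᵥ y) := by
    simpa [dotProduct, pow_two] using
      Finset.sum_mul_sq_le_sq_mul_sq Finset.univ x y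
  have hyy : 0 < y ⬝ᵥ y := h3 ▸ hi
  have h4 : (1:ℝ)/4 ≤ (x ⬝ᵥ x) * (y ⬝ᵥ y) := by
    nlinarith [sq_nonneg (x ⬝ᵥ y)]
  rw [h1]
  rw [div_le_iff₀ (by positivity)]
  rw [h3]
  nlinarith
end
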